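/- arXiv:1904.12853 — 2 statements merged into one kernel-verified Lean document; each statement's English description precedes it below -/
import Mathlib

section
/- Let F : C → D be a weight-exact functor between triangulated categories equipped with weight structures w and w'. If a morphism h in C kills weights m,…,n (with respect to w), then F(h) kills weights m,…,n (with respect to w'). Moreover, if F is additionally a full embedding, then the converse holds: if F(h) kills weights m,…,n, then h kills weights m,…,n. -/
open CategoryTheory Limits Pretriangulated

structure WeightStructure (C : Type*) [Category C] [Preadditive C] [HasZeroObject C]
    [HasShift C ℤ] [∀ n : ℤ, (CategoryTheory.shiftFunctor C n).Additive] [Pretriangulated C] where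
  le : Set C
  ge : Set C
  le_retract : ∀ ⦃X Y : C⦄, Y ∈ le → ∀ (i : X ⟶ Y) (r : Y ⟶ X), i ≫ r = 𝟙 X → X ∈ le
  ge_retract : ∀ ⦃X Y : C⦄, Y ∈ ge → ∀ (i : X ⟶ Y) (r : Y ⟶ X), i ≫ r = 𝟙 X → X ∈ ge
  le_shift : ∀ ⦃X : C⦄, X ∈ le → X⟦(-1 : ℤ)⟧ ∈ le
  ge_shift : ∀ ⦃X : C⦄, X ∈ ge → X⟦(1 : ℤ)⟧ ∈ ge
  orth : ∀ ⦃X Y : C⦄, X ∈ le → Y ∈ ge → ∀ f : X ⟶ Y⟦(1 : ℤ)⟧, f = 0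
  decomp : ∀ M : C, ∃ (L R : C) (f : L ⟶ M) (g : M ⟶ R) (δ : R ⟶ L⟦(1 : ℤ)⟧),
    (Triangle.mk f g δ ∈ distTriang C) ∧ L ∈ le ∧ R⟦(-1 : ℤ)⟧ ∈ ge

namespace WeightStructure

variable {C : Type*} [Category C] [Preadditive C] [HasZeroObject C]
  [HasShift C ℤ] [∀ n : ℤ, (CategoryTheory.shiftFunctor C n).Additive] [Pretriangulated C]
  (w : WeightStructure C)

/-- The class `C_{w ≤ n} = C_{w≤0}[n]`. -/
def Le (n : ℤ) : Set C := {X | X⟦(-n)⟧ ∈ w.le}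

/-- The class `C_{w ≥ n} = C_{w≥0}[n]`. -/
def Ge (n : ℤ) : Set C := {X | X⟦(-n)⟧ ∈ w.ge}

/-- `f, g, δ` form a `k`-weight decomposition triangle of `M`. -/
def IsWeightDecomp (k : ℤ) {A M B : C} (f : A ⟶ M) (g : M ⟶ B) (δ : B ⟶ A⟦(1 : ℤ)⟧) : Prop :=
  (Triangle.mk f g δ ∈ distTriang C) ∧ A ∈ w.Le k ∧ B ∈ w.Ge (k + 1)

/-- `g : M ⟶ N` kills weights `m,…,n`. -/
def KillsWeights (m n : ℤ) {M N : C} (g : M ⟶ N) : Prop :=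
  ∃ (A B A' B' : C) (a : A ⟶ M) (b : M ⟶ B) (δ : B ⟶ A⟦(1 : ℤ)⟧)
    (a' : A' ⟶ N) (b' : N ⟶ B') (δ' : B' ⟶ A'⟦(1 : ℤ)⟧),
    w.IsWeightDecomp n a b δ ∧ w.IsWeightDecomp (m - 1) a' b' δ' ∧ a ≫ g ≫ b' = 0

/-- `M` is without weights `m,…,n`. -/
def WithoutWeights (m n : ℤ) (M : C) : Prop := w.KillsWeights m n (𝟙 M)

end WeightStructure

namespace WeightStructure

variable {C : Type*} [Category C] [Preadditive C] [HasZeroObject C]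
  [HasShift C ℤ] [∀ n : ℤ, (CategoryTheory.shiftFunctor C n).Additive] [Pretriangulated C]
  (w : WeightStructure C)

lemma mem_le_of_iso {X Y : C} (e : X ≅ Y) (hX : X ∈ w.le) : Y ∈ w.le :=
  w.le_retract hX e.inv e.hom e.inv_hom_id

lemma mem_ge_of_iso {X Y : C} (e : X ≅ Y) (hX : X ∈ w.ge) : Y ∈ w.ge :=
  w.ge_retract hX e.inv e.hom e.inv_hom_id

/-- Existence of `k`-weight decompositions for every object. -/
lemma exists_weightDecomp (k : ℤ) (M : C) :
    ∃ (A B : C) (f : A ⟶ M) (g : M ⟶ B) (δ : B ⟶ A⟦(1 : ℤ)⟧), w.IsWeightDecomp k f g δ := by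
  obtain ⟨L, R, f, g, δ, hT, hL, hR⟩ := w.decomp (M⟦(-k : ℤ)⟧)
  have hshift := Pretriangulated.Triangle.shift_distinguished _ hT k
  set T := (CategoryTheory.shiftFunctor (Triangle C) k).obj (Triangle.mk f g δ) with hTdef
  let e₂ : (M⟦(-k : ℤ)⟧)⟦k⟧ ≅ M := (shiftFunctorCompIsoId C (-k) k (by ring)).app M
  have hobj₂ : T.obj₂ = (M⟦(-k : ℤ)⟧)⟦k⟧ := rfl
  refine ⟨T.obj₁, T.obj₃, T.mor₁ ≫ e₂.hom, e₂.inv ≫ T.mor₂, T.mor₃, ?_, ?_, ?_⟩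
  · refine isomorphic_distinguished _ hshift _ ?_
    exact Triangle.isoMk _ _ (Iso.refl _) e₂.symm (Iso.refl _)
      (by show (T.mor₁ ≫ e₂.hom) ≫ e₂.inv = 𝟙 T.obj₁ ≫ T.mor₁; exact (Category.assoc _ _ _).trans ((congrArg (T.mor₁ ≫ ·) e₂.hom_inv_id).trans ((Category.comp_id _).trans (Category.id_comp _).symm)))
      (by show (e₂.inv ≫ T.mor₂) ≫ 𝟙 T.obj₃ = e₂.inv ≫ T.mor₂; simp)
      (by show T.mor₃ ≫ (shiftFunctor C (1 : ℤ)).map (𝟙 T.obj₁) = 𝟙 T.obj₃ ≫ T.mor₃; simp)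
  · exact w.mem_le_of_iso ((shiftFunctorCompIsoId C k (-k) (by ring)).app L).symm hL
  · exact w.mem_ge_of_iso ((shiftFunctorAdd' C k (-(k+1)) (-1) (by ring)).app R) hR

/-- Orthogonality: no nonzero maps from `Le k` to `Ge (k+1)`. -/
lemma orth_le_ge (k : ℤ) {A B : C} (hA : A ∈ w.Le k) (hB : B ∈ w.Ge (k + 1))
    (f : A ⟶ B) : f = 0 := by
  have e : B⟦(-k : ℤ)⟧ ≅ (B⟦(-(k+1) : ℤ)⟧)⟦(1 : ℤ)⟧ :=
    (shiftFunctorAdd' C (-(k+1)) 1 (-k) (by ring)).app B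
  have h0 : f⟦(-k : ℤ)⟧' ≫ e.hom = 0 := w.orth hA hB _
  have h1 : f⟦(-k : ℤ)⟧' = 0 := by
    rw [← Category.comp_id (f⟦(-k : ℤ)⟧'), ← e.hom_inv_id, ← Category.assoc, h0, zero_comp]
  apply (shiftFunctor C (-k : ℤ)).map_injective
  rw [h1, Functor.map_zero]

end WeightStructure

/-- weight-exact functors preserve killing of weights; full embeddings
also detect it. -/
theorem killsWeights_map_iff {C : Type*} [Category C] [Preadditive C] [HasZeroObject C]
    [HasShift C ℤ] [∀ n : ℤ, (CategoryTheory.shiftFunctor C n).Additive] [Pretriangulated C]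
    {D : Type*} [Category D] [Preadditive D] [HasZeroObject D]
    [HasShift D ℤ] [∀ n : ℤ, (CategoryTheory.shiftFunctor D n).Additive] [Pretriangulated D]
    (w : WeightStructure C) (w' : WeightStructure D)
    (F : C ⥤ D) [F.CommShift ℤ] [F.IsTriangulated]
    (hle : ∀ X ∈ w.le, F.obj X ∈ w'.le) (hge : ∀ X ∈ w.ge, F.obj X ∈ w'.ge)
    (m n : ℤ) (hmn : m ≤ n) {M N : C} (h : M ⟶ N) :
    (w.KillsWeights m n h → w'.KillsWeights m n (F.map h)) ∧
      (F.Full → F.Faithful → w'.KillsWeights m n (F.map h) → w.KillsWeights m n h) := by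
  have FLe : ∀ (k : ℤ) (X : C), X ∈ w.Le k → F.obj X ∈ w'.Le k := by
    intro k X hX
    exact w'.mem_le_of_iso ((F.commShiftIso (-k : ℤ)).app X) (hle _ hX)
  have FGe : ∀ (k : ℤ) (X : C), X ∈ w.Ge k → F.obj X ∈ w'.Ge k := by
    intro k X hX
    exact w'.mem_ge_of_iso ((F.commShiftIso (-k : ℤ)).app X) (hge _ hX)
  constructor
  · rintro ⟨A, B, A', B', a, b, δ, a', b', δ', ⟨hT, hA, hB⟩, ⟨hT', hA', hB'⟩, hz⟩
    refine ⟨F.obj A, F.obj B, F.obj A', F.obj B', F.map a, F.map b,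
      F.map δ ≫ (F.commShiftIso (1 : ℤ)).hom.app A,
      F.map a', F.map b', F.map δ' ≫ (F.commShiftIso (1 : ℤ)).hom.app A',
      ⟨F.map_distinguished _ hT, FLe _ _ hA, FGe _ _ hB⟩,
      ⟨F.map_distinguished _ hT', FLe _ _ hA', FGe _ _ hB'⟩, ?_⟩
    rw [← F.map_comp, ← F.map_comp, hz, F.map_zero]
  · intro _ hfaith
    rintro ⟨A₂, B₂, A₂', B₂', α, β, δ₂, α', β', δ₂', ⟨hT₂, hA₂, hB₂⟩, ⟨hT₂', hA₂', hB₂'⟩, hz⟩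
    obtain ⟨A, B, a, b, δ, hd⟩ := w.exists_weightDecomp n M
    obtain ⟨A', B', a', b', δ', hd'⟩ := w.exists_weightDecomp (m - 1) N
    refine ⟨A, B, A', B', a, b, δ, a', b', δ', hd, hd', ?_⟩
    apply F.map_injective
    rw [F.map_comp, F.map_comp, F.map_zero]
    have h1 : (F.map a) ≫ β = 0 := w'.orth_le_ge n (FLe _ _ hd.2.1) hB₂ _
    obtain ⟨u, hu⟩ : ∃ u : F.obj A ⟶ A₂, F.map a = u ≫ α := Pretriangulated.Triangle.coyoneda_exact₂ _ hT₂ (F.map a) h1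
    have h2 : α' ≫ F.map b' = 0 := w'.orth_le_ge (m - 1) hA₂' (FGe _ _ (hd'.2.2)) _
    obtain ⟨v, hv⟩ : ∃ v : B₂' ⟶ F.obj B', F.map b' = β' ≫ v := Pretriangulated.Triangle.yoneda_exact₂ _ hT₂' (F.map b') h2
    have hu' : F.map a = u ≫ α := hu
    have hv' : F.map b' = β' ≫ v := hv
    rw [hu', hv', Category.assoc, reassoc_of% hz, zero_comp, comp_zero]
end

section
/- Let w be a weight structure on a triangulated category C with idempotent-complete heart. Suppose given an m-weight decomposition triangle T: w_{≤m}M → M → w_{≥m+1}M → w_{≤m}M[1] and an idempotent endomorphism h of w_{≤m}M compatible with id_M (i.e., the arrow w_{≤m}M → M composed after h equals itself). Then there is a direct sum decomposition w_{≤m}M ≅ M₁ ⊕ M₀ realizing h as projection onto M₁, with M₀ ∈ C_{w=m}, and the triangle T decomposes as the direct sum of an m-weight decomposition M₁ → M → M₂ → M₁[1] and the triangle M₀ → 0 → M₀[1] → M₀[1]. -/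
open CategoryTheory Limits Pretriangulated

/-- The heart of `w` is idempotent complete. -/
def WeightStructure.WeightKaroubian {C : Type*} [Category C] [Preadditive C] [HasZeroObject C]
    [HasShift C ℤ] [∀ n : ℤ, (CategoryTheory.shiftFunctor C n).Additive] [Pretriangulated C]
    (w : WeightStructure C) : Prop :=
  ∀ X : C, X ∈ w.Le 0 ∩ w.Ge 0 → ∀ e : X ⟶ X, e ≫ e = e →
    ∃ (Y : C) (_ : Y ∈ w.Le 0 ∩ w.Ge 0) (i : Y ⟶ X) (p : X ⟶ Y),
      i ≫ p = 𝟙 Y ∧ p ≫ i = e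

namespace WeightStructure

variable {C : Type*} [Category C] [Preadditive C] [HasZeroObject C]
  [HasShift C ℤ] [∀ n : ℤ, (CategoryTheory.shiftFunctor C n).Additive] [Pretriangulated C]
  (w : WeightStructure C)

lemma le_iso {X Y : C} (e : X ≅ Y) (hY : Y ∈ w.le) : X ∈ w.le :=
  w.le_retract hY e.hom e.inv e.hom_inv_id

lemma ge_iso {X Y : C} (e : X ≅ Y) (hY : Y ∈ w.ge) : X ∈ w.ge :=
  w.ge_retract hY e.hom e.inv e.hom_inv_id

lemma Le_retract {k : ℤ} {X Y : C} (hY : Y ∈ w.Le k) (i : X ⟶ Y) (r : Y ⟶ X)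
    (hir : i ≫ r = 𝟙 X) : X ∈ w.Le k :=
  w.le_retract hY ((shiftFunctor C (-k)).map i) ((shiftFunctor C (-k)).map r)
    (by rw [← CategoryTheory.Functor.map_comp, hir, CategoryTheory.Functor.map_id])

lemma Ge_retract {k : ℤ} {X Y : C} (hY : Y ∈ w.Ge k) (i : X ⟶ Y) (r : Y ⟶ X)
    (hir : i ≫ r = 𝟙 X) : X ∈ w.Ge k :=
  w.ge_retract hY ((shiftFunctor C (-k)).map i) ((shiftFunctor C (-k)).map r)
    (by rw [← CategoryTheory.Functor.map_comp, hir, CategoryTheory.Functor.map_id])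

lemma Le_shift {n : ℤ} {X : C} (hX : X ∈ w.Le n) (r s : ℤ) (hs : n + r = s) :
    X⟦r⟧ ∈ w.Le s :=
  w.le_iso (((shiftFunctorAdd' C r (-s) (-n) (by omega)).app X).symm) hX

lemma Ge_shift {n : ℤ} {X : C} (hX : X ∈ w.Ge n) (r s : ℤ) (hs : n + r = s) :
    X⟦r⟧ ∈ w.Ge s :=
  w.ge_iso (((shiftFunctorAdd' C r (-s) (-n) (by omega)).app X).symm) hX

lemma hom_zero {k : ℤ} {X Y : C} (hX : X ∈ w.Le k) (hY : Y ∈ w.Ge (k + 1)) (φ : X ⟶ Y) :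
    φ = 0 := by
  have h0 : (shiftFunctor C (-k)).map φ ≫
      ((shiftFunctorAdd' C (-(k+1)) 1 (-k) (by omega)).app Y).hom = 0 :=
    w.orth hX hY _
  have h1 : (shiftFunctor C (-k)).map φ = 0 := by
    rw [← Category.comp_id ((shiftFunctor C (-k)).map φ),
      ← Iso.hom_inv_id ((shiftFunctorAdd' C (-(k+1)) 1 (-k) (by omega)).app Y),
      ← Category.assoc, h0, zero_comp]
  apply (shiftFunctor C (-k)).map_injective
  rw [h1, CategoryTheory.Functor.map_zero]

lemma exists_wdecomp (k : ℤ) (M : C) :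
    ∃ (L R : C) (a : L ⟶ M) (b : M ⟶ R) (d : R ⟶ L⟦(1 : ℤ)⟧), w.IsWeightDecomp k a b d := by
  obtain ⟨L', R', f', g', δ', hT, hL', hR'⟩ := w.decomp (M⟦-k⟧)
  set S := (CategoryTheory.shiftFunctor (Triangle C) k).obj (Triangle.mk f' g' δ') with hSdef
  have hS : S ∈ distTriang C := Pretriangulated.Triangle.shift_distinguished _ hT k
  set u : ((M⟦-k⟧)⟦k⟧ : C) ≅ M := (shiftFunctorCompIsoId C (-k) k (by omega)).app M with hu
  have hS' : Triangle.mk (S.mor₁ ≫ u.hom) (u.inv ≫ S.mor₂) S.mor₃ ∈ distTriang C := by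
    refine isomorphic_distinguished _ hS _
      (Triangle.isoMk _ _ (Iso.refl _) u.symm (Iso.refl _) ?_ ?_ ?_) <;> simp
    · show (S.mor₁ ≫ u.hom) ≫ u.inv = 𝟙 S.obj₁ ≫ S.mor₁
      exact (Category.assoc _ _ _).trans ((congrArg _ u.hom_inv_id).trans
        ((Category.comp_id _).trans (Category.id_comp _).symm))
    · show (u.inv ≫ S.mor₂) ≫ 𝟙 S.obj₃ = u.inv ≫ S.mor₂; simp
    · show S.mor₃ ≫ (shiftFunctor C 1).map (𝟙 S.obj₁) = 𝟙 S.obj₃ ≫ S.mor₃; simp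
  refine ⟨L'⟦k⟧, R'⟦k⟧, S.mor₁ ≫ u.hom, u.inv ≫ S.mor₂, S.mor₃, hS', ?_, ?_⟩
  · exact w.le_iso ((shiftFunctorCompIsoId C k (-k) (by omega)).app L') hL'
  · exact w.ge_iso (((shiftFunctorAdd' C k (-(k+1)) (-1) (by omega)).app R').symm) hR'

lemma ge_ext (k : ℤ) (T : Triangle C) (hT : T ∈ distTriang C)
    (h1 : T.obj₁ ∈ w.Ge k) (h3 : T.obj₃ ∈ w.Ge k) : T.obj₂ ∈ w.Ge k := by
  obtain ⟨Y', Y'', α, π, d, hT', hY', hY''⟩ := w.exists_wdecomp (k - 1) T.obj₂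
  have hk : k - 1 + 1 = k := by omega
  rw [hk] at hY''
  have hα3 : α ≫ T.mor₂ = 0 := w.hom_zero hY' (by rw [hk]; exact h3) _
  obtain ⟨β, hβ⟩ := Triangle.coyoneda_exact₂ T hT α hα3
  have hβ0 : β = 0 := w.hom_zero hY' (by rw [hk]; exact h1) β
  obtain ⟨s, hs⟩ := Triangle.yoneda_exact₂ _ hT' (𝟙 T.obj₂)
    (by show α ≫ 𝟙 T.obj₂ = 0; rw [hβ, hβ0, zero_comp, zero_comp])
  exact w.Ge_retract hY'' π s hs.symm

lemma split_idem (hkar : w.WeightKaroubian) (k : ℤ) {X : C}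
    (hX : X ∈ w.Le k ∩ w.Ge k) (ε : X ⟶ X) (hε : ε ≫ ε = ε) :
    ∃ (Y : C) (_ : Y ∈ w.Le k ∩ w.Ge k) (i : Y ⟶ X) (p : X ⟶ Y),
      i ≫ p = 𝟙 Y ∧ p ≫ i = ε := by
  have hX0 : (X⟦-k⟧ : C) ∈ w.Le 0 ∩ w.Ge 0 :=
    ⟨w.Le_shift hX.1 (-k) 0 (by omega), w.Ge_shift hX.2 (-k) 0 (by omega)⟩
  have hε' : (shiftFunctor C (-k)).map ε ≫ (shiftFunctor C (-k)).map ε =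
      (shiftFunctor C (-k)).map ε := by rw [← CategoryTheory.Functor.map_comp, hε]
  obtain ⟨Y, hY, i, p, hip, hpi⟩ := hkar _ hX0 _ hε'
  set u : ((X⟦-k⟧)⟦k⟧ : C) ≅ X := (shiftFunctorCompIsoId C (-k) k (by omega)).app X with hu
  refine ⟨Y⟦k⟧, ⟨w.Le_shift hY.1 k k (by omega), w.Ge_shift hY.2 k k (by omega)⟩,
    (shiftFunctor C k).map i ≫ u.hom, u.inv ≫ (shiftFunctor C k).map p, ?_, ?_⟩
  · rw [Category.assoc, Iso.hom_inv_id_assoc, ← CategoryTheory.Functor.map_comp, hip, CategoryTheory.Functor.map_id]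
  · have hnat : (shiftFunctor C k).map ((shiftFunctor C (-k)).map ε) ≫ u.hom = u.hom ≫ ε := by
      exact (shiftFunctorCompIsoId C (-k) k (by omega)).hom.naturality ε
    rw [Category.assoc, ← CategoryTheory.Functor.map_comp_assoc, hpi, hnat, Iso.inv_hom_id_assoc]

lemma exists_split (hkar : w.WeightKaroubian) (m : ℤ) {A M B : C}
    (f : A ⟶ M) (g : M ⟶ B) (δ : B ⟶ A⟦(1 : ℤ)⟧) (hd : w.IsWeightDecomp m f g δ)
    (e : A ⟶ A) (hee : e ≫ e = e) (hef : e ≫ f = 0) :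
    ∃ (M₀ : C) (_ : M₀ ∈ w.Le m ∩ w.Ge m) (i₀ : M₀ ⟶ A) (p₀ : A ⟶ M₀),
      i₀ ≫ p₀ = 𝟙 M₀ ∧ p₀ ≫ i₀ = e ∧ i₀ ≫ f = 0 := by
  obtain ⟨hT, hA, hB⟩ := hd
  have hTinv := inv_rot_of_distTriang _ hT
  have hιf : (Triangle.mk f g δ).invRotate.mor₁ ≫ f = 0 := comp_distTriang_mor_zero₁₂ _ hTinv
  obtain ⟨φ, hφ⟩ : ∃ φ : A ⟶ (B⟦(-1 : ℤ)⟧ : C), e = φ ≫ (Triangle.mk f g δ).invRotate.mor₁ :=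
    Triangle.coyoneda_exact₂ _ hTinv e hef
  have hW : (B⟦(-1 : ℤ)⟧ : C) ∈ w.Ge m := w.Ge_shift hB (-1) m (by omega)
  obtain ⟨L, R, a, b, dL, hTL, hLle, hRge⟩ := w.exists_wdecomp m (B⟦(-1 : ℤ)⟧)
  have hLge : L ∈ w.Ge m :=
    w.ge_ext m _ (inv_rot_of_distTriang _ hTL) (w.Ge_shift hRge (-1) m (by omega)) hW
  have hφb : φ ≫ b = 0 := w.hom_zero hA hRge _
  obtain ⟨φL, hφL⟩ : ∃ φL : A ⟶ L, φ = φL ≫ a := Triangle.coyoneda_exact₂ _ hTL φ hφb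
  set ι : (B⟦(-1 : ℤ)⟧ : C) ⟶ A := (Triangle.mk f g δ).invRotate.mor₁ with hιdef
  have hkey : φL ≫ a ≫ ι = e := by
    rw [← Category.assoc, ← hφL]; exact hφ.symm
  have hε : ((a ≫ ι) ≫ e ≫ φL) ≫ (a ≫ ι) ≫ e ≫ φL = (a ≫ ι) ≫ e ≫ φL := by
    simp only [Category.assoc, reassoc_of% hkey, reassoc_of% hee]
  obtain ⟨M₀, hM₀, i₀', p₀', hip', hpi'⟩ := w.split_idem hkar m ⟨hLle, hLge⟩ _ hε
  refine ⟨M₀, hM₀, i₀' ≫ a ≫ ι, (e ≫ φL) ≫ p₀', ?_, ?_, ?_⟩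
  · simp only [Category.assoc]
    rw [← reassoc_of% hpi']
    rw [reassoc_of% hip', hip']
  · simp only [Category.assoc]
    rw [reassoc_of% hpi']
    simp only [reassoc_of% hkey, reassoc_of% hee, hkey, hee]
  · simp only [Category.assoc, show ι ≫ f = 0 from hιf, comp_zero]

end WeightStructure


/-- splitting an idempotent compatible with the identity on an
`m`-weight decomposition. -/
theorem weight_decomposition_splits_idempotent {C : Type*} [Category C] [Preadditive C]
    [HasZeroObject C] [HasShift C ℤ] [∀ n : ℤ, (CategoryTheory.shiftFunctor C n).Additive]
    [Pretriangulated C] (w : WeightStructure C) (hkar : w.WeightKaroubian)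
    (m : ℤ) {A M B : C} (f : A ⟶ M) (g : M ⟶ B) (δ : B ⟶ A⟦(1 : ℤ)⟧)
    (hd : w.IsWeightDecomp m f g δ)
    (h : A ⟶ A) (hidem : h ≫ h = h) (hcomp : h ≫ f = f) :
    ∃ (M₁ M₀ : C) (i₁ : M₁ ⟶ A) (p₁ : A ⟶ M₁) (i₀ : M₀ ⟶ A) (p₀ : A ⟶ M₀),
      -- `A ≅ M₁ ⊕ M₀`, with `h` the projection onto `M₁`
      i₁ ≫ p₁ = 𝟙 M₁ ∧ i₀ ≫ p₀ = 𝟙 M₀ ∧ i₁ ≫ p₀ = 0 ∧ i₀ ≫ p₁ = 0 ∧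
      p₁ ≫ i₁ + p₀ ≫ i₀ = 𝟙 A ∧ p₁ ≫ i₁ = h ∧
      -- `M₀` is of weight exactly `m`
      M₀ ∈ w.Le m ∩ w.Ge m ∧
      -- the triangle decomposes as the direct sum of an `m`-weight decomposition
      -- `M₁ → M → M₂ → M₁[1]` and the triangle `M₀ → 0 → M₀[1] → M₀[1]`
      ∃ (M₂ : C) (f₁ : M₁ ⟶ M) (g₁ : M ⟶ M₂) (δ₁ : M₂ ⟶ M₁⟦(1 : ℤ)⟧),
        w.IsWeightDecomp m f₁ g₁ δ₁ ∧
        ∃ (j₂ : M₂ ⟶ B) (q₂ : B ⟶ M₂) (j₀ : M₀⟦(1 : ℤ)⟧ ⟶ B) (q₀ : B ⟶ M₀⟦(1 : ℤ)⟧),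
          j₂ ≫ q₂ = 𝟙 M₂ ∧ j₀ ≫ q₀ = 𝟙 (M₀⟦(1 : ℤ)⟧) ∧ j₂ ≫ q₀ = 0 ∧ j₀ ≫ q₂ = 0 ∧
          q₂ ≫ j₂ + q₀ ≫ j₀ = 𝟙 B ∧
          f = p₁ ≫ f₁ ∧ g = g₁ ≫ j₂ ∧
          δ = q₂ ≫ δ₁ ≫ (CategoryTheory.shiftFunctor C (1 : ℤ)).map i₁ +
            q₀ ≫ (CategoryTheory.shiftFunctor C (1 : ℤ)).map i₀ := by
  obtain ⟨hT, hA, hB⟩ := hd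
  have hee : (𝟙 A - h) ≫ (𝟙 A - h) = 𝟙 A - h := by
    simp [Preadditive.sub_comp, Preadditive.comp_sub, hidem]
  have hef : (𝟙 A - h) ≫ f = 0 := by simp [Preadditive.sub_comp, hcomp]
  obtain ⟨M₀, hM₀, i₀, p₀, hi₀p₀, hp₀i₀, hi₀f⟩ :=
    w.exists_split hkar m f g δ ⟨hT, hA, hB⟩ (𝟙 A - h) hee hef
  obtain ⟨M₁, p₁, d, hT0⟩ := Pretriangulated.distinguished_cocone_triangle i₀
  have hi₀p₁ : i₀ ≫ p₁ = 0 := comp_distTriang_mor_zero₁₂ _ hT0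
  have hd31 : d ≫ (shiftFunctor C (1 : ℤ)).map i₀ = 0 := comp_distTriang_mor_zero₃₁ _ hT0
  have hd0 : d = 0 := by
    have hh : d ≫ (shiftFunctor C (1 : ℤ)).map (i₀ ≫ p₀) = d := by
      rw [hi₀p₀, CategoryTheory.Functor.map_id, Category.comp_id]
    rw [← hh, CategoryTheory.Functor.map_comp, ← Category.assoc, hd31, zero_comp]
  obtain ⟨i₁₀, hi₁₀⟩ : ∃ i₁₀ : M₁ ⟶ A, 𝟙 M₁ = i₁₀ ≫ p₁ :=
    Triangle.coyoneda_exact₃ _ hT0 (𝟙 M₁) (by show 𝟙 M₁ ≫ d = 0; rw [hd0, comp_zero])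
  obtain ⟨i₁, hi₁def⟩ : ∃ i₁ : M₁ ⟶ A, i₁ = i₁₀ ≫ h := ⟨_, rfl⟩
  have hhp₀ : h ≫ p₀ = 0 := by
    have h1 : (𝟙 A - h) ≫ p₀ = p₀ := by
      rw [← hp₀i₀, Category.assoc, hi₀p₀, Category.comp_id]
    rw [Preadditive.sub_comp, Category.id_comp] at h1
    exact sub_eq_self.mp h1
  have hi₁p₀ : i₁ ≫ p₀ = 0 := by rw [hi₁def, Category.assoc, hhp₀, comp_zero]
  have hhp₁ : h ≫ p₁ = p₁ := by
    have h1 : (𝟙 A - h) ≫ p₁ = 0 := by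
      rw [← hp₀i₀, Category.assoc, hi₀p₁, comp_zero]
    rw [Preadditive.sub_comp, Category.id_comp, sub_eq_zero] at h1
    exact h1.symm
  have hi₁p₁ : i₁ ≫ p₁ = 𝟙 M₁ := by rw [hi₁def, Category.assoc, hhp₁]; exact hi₁₀.symm
  have hup : (𝟙 A - p₀ ≫ i₀ - p₁ ≫ i₁) ≫ p₁ = 0 := by
    simp [Preadditive.sub_comp, hi₀p₁, hi₁p₁]
  obtain ⟨v, hv⟩ : ∃ v : A ⟶ M₀, 𝟙 A - p₀ ≫ i₀ - p₁ ≫ i₁ = v ≫ i₀ :=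
    Triangle.coyoneda_exact₂ _ hT0 _ hup
  have hv0 : v = 0 := by
    have h2 : (𝟙 A - p₀ ≫ i₀ - p₁ ≫ i₁) ≫ p₀ = v := by
      rw [hv, Category.assoc, hi₀p₀, Category.comp_id]
    rw [← h2]
    simp [Preadditive.sub_comp, hi₁p₀, hi₀p₀]
  rw [hv0, zero_comp, sub_sub, sub_eq_zero] at hv
  have hsum : p₁ ≫ i₁ + p₀ ≫ i₀ = 𝟙 A := by rw [hv]; exact add_comm _ _
  have hp₁i₁ : p₁ ≫ i₁ = h := by
    have hx : p₁ ≫ i₁ = 𝟙 A - p₀ ≫ i₀ := by rw [hv]; abel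
    rw [hx, hp₀i₀]; simp
  have hM₁le : M₁ ∈ w.Le m := w.Le_retract hA i₁ p₁ hi₁p₁
  obtain ⟨M₂, g₁, δ₁, hT1⟩ := Pretriangulated.distinguished_cocone_triangle (i₁ ≫ f)
  have hfp : p₁ ≫ i₁ ≫ f = f := by rw [← Category.assoc, hp₁i₁, hcomp]
  obtain ⟨j₂, hj₂g, hj₂δ⟩ : ∃ j₂ : M₂ ⟶ B, g₁ ≫ j₂ = 𝟙 M ≫ g ∧
      δ₁ ≫ (shiftFunctor C (1 : ℤ)).map i₁ = j₂ ≫ δ :=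
    Pretriangulated.complete_distinguished_triangle_morphism (Triangle.mk (i₁ ≫ f) g₁ δ₁)
      (Triangle.mk f g δ) hT1 hT i₁ (𝟙 M) (by show (i₁ ≫ f) ≫ 𝟙 M = i₁ ≫ f; rw [Category.comp_id])
  rw [Category.id_comp] at hj₂g
  obtain ⟨q₂', hq₂'g, hq₂'δ⟩ : ∃ q₂' : B ⟶ M₂, g ≫ q₂' = 𝟙 M ≫ g₁ ∧
      δ ≫ (shiftFunctor C (1 : ℤ)).map p₁ = q₂' ≫ δ₁ :=
    Pretriangulated.complete_distinguished_triangle_morphism (Triangle.mk f g δ)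
      (Triangle.mk (i₁ ≫ f) g₁ δ₁) hT hT1 p₁ (𝟙 M)
      (by show f ≫ 𝟙 M = p₁ ≫ i₁ ≫ f; rw [Category.comp_id, hfp])
  rw [Category.id_comp] at hq₂'g
  have hrot := rot_of_distTriang _ hT
  obtain ⟨j₀, hj₀⟩ : ∃ j₀ : (M₀⟦(1 : ℤ)⟧ : C) ⟶ B,
      (shiftFunctor C (1 : ℤ)).map i₀ = j₀ ≫ δ :=
    Triangle.coyoneda_exact₃ _ hrot ((shiftFunctor C (1 : ℤ)).map i₀)
      (by
        show (shiftFunctor C (1 : ℤ)).map i₀ ≫ (-((shiftFunctor C (1 : ℤ)).map f)) = 0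
        rw [Preadditive.comp_neg, ← CategoryTheory.Functor.map_comp, hi₀f,
          CategoryTheory.Functor.map_zero, neg_zero])
  obtain ⟨q₀, hq₀def⟩ : ∃ q₀ : B ⟶ (M₀⟦(1 : ℤ)⟧ : C),
      q₀ = δ ≫ (shiftFunctor C (1 : ℤ)).map p₀ := ⟨_, rfl⟩
  have hj₀q₀ : j₀ ≫ q₀ = 𝟙 (M₀⟦(1 : ℤ)⟧) := by
    rw [hq₀def, ← Category.assoc, ← hj₀, ← CategoryTheory.Functor.map_comp, hi₀p₀,
      CategoryTheory.Functor.map_id]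
  have hj₂q₀ : j₂ ≫ q₀ = 0 := by
    rw [hq₀def, ← Category.assoc, ← hj₂δ, Category.assoc, ← CategoryTheory.Functor.map_comp,
      hi₁p₀, CategoryTheory.Functor.map_zero, comp_zero]
  obtain ⟨u2, hu2def⟩ : ∃ u2 : M₂ ⟶ M₂, u2 = 𝟙 M₂ - j₂ ≫ q₂' := ⟨_, rfl⟩
  have hg₁u : g₁ ≫ u2 = 0 := by
    rw [hu2def, Preadditive.comp_sub, Category.comp_id, ← Category.assoc, hj₂g, hq₂'g, sub_self]
  have hu2δ : u2 ≫ δ₁ = 0 := by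
    rw [hu2def, Preadditive.sub_comp, Category.id_comp, Category.assoc, ← hq₂'δ,
      ← Category.assoc, ← hj₂δ, Category.assoc, ← CategoryTheory.Functor.map_comp, hi₁p₁,
      CategoryTheory.Functor.map_id, Category.comp_id, sub_self]
  obtain ⟨s, hs⟩ : ∃ s : (M₁⟦(1 : ℤ)⟧ : C) ⟶ M₂, u2 = δ₁ ≫ s :=
    Triangle.yoneda_exact₃ _ hT1 u2 hg₁u
  have hu2sq : u2 ≫ u2 = 0 := by
    have hh : u2 ≫ u2 = (u2 ≫ δ₁) ≫ s := by rw [Category.assoc, ← hs]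
    rw [hh, hu2δ, zero_comp]
  obtain ⟨q₂, hq₂def⟩ : ∃ q₂ : B ⟶ M₂, q₂ = (𝟙 B - q₀ ≫ j₀) ≫ q₂' ≫ (𝟙 M₂ + u2) := ⟨_, rfl⟩
  have hj₂q₂ : j₂ ≫ q₂ = 𝟙 M₂ := by
    rw [hq₂def, ← Category.assoc]
    have h1 : j₂ ≫ (𝟙 B - q₀ ≫ j₀) = j₂ := by
      rw [Preadditive.comp_sub, Category.comp_id, ← Category.assoc, hj₂q₀, zero_comp, sub_zero]
    rw [h1, ← Category.assoc]
    have h2 : j₂ ≫ q₂' = 𝟙 M₂ - u2 := by rw [hu2def]; abel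
    rw [h2]
    simp [Preadditive.sub_comp, Preadditive.comp_add, hu2sq]
  have hj₀q₂ : j₀ ≫ q₂ = 0 := by
    rw [hq₂def, ← Category.assoc]
    have h1 : j₀ ≫ (𝟙 B - q₀ ≫ j₀) = 0 := by
      rw [Preadditive.comp_sub, Category.comp_id, ← Category.assoc, hj₀q₀, Category.id_comp,
        sub_self]
    rw [h1, zero_comp]
  have hgq₀ : g ≫ q₀ = 0 := by
    have hgδ : g ≫ δ = 0 := comp_distTriang_mor_zero₂₃ _ hT
    rw [hq₀def, ← Category.assoc, hgδ, zero_comp]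
  have hgq₂ : g ≫ q₂ = g₁ := by
    rw [hq₂def, ← Category.assoc]
    have h1 : g ≫ (𝟙 B - q₀ ≫ j₀) = g := by
      rw [Preadditive.comp_sub, Category.comp_id, ← Category.assoc, hgq₀, zero_comp, sub_zero]
    rw [h1, ← Category.assoc, hq₂'g, Preadditive.comp_add, Category.comp_id, hg₁u, add_zero]
  obtain ⟨r, hrdef⟩ : ∃ r : B ⟶ B, r = 𝟙 B - q₂ ≫ j₂ - q₀ ≫ j₀ := ⟨_, rfl⟩
  have hgr : g ≫ r = 0 := by
    rw [hrdef]
    simp only [Preadditive.comp_sub, Category.comp_id, ← Category.assoc, hgq₂, hgq₀,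
      zero_comp, sub_zero, hj₂g, sub_self]
  obtain ⟨t, ht⟩ : ∃ t : (A⟦(1 : ℤ)⟧ : C) ⟶ B, r = δ ≫ t :=
    Triangle.yoneda_exact₃ _ hT r hgr
  have hj₂r : j₂ ≫ r = 0 := by
    rw [hrdef]
    simp only [Preadditive.comp_sub, Category.comp_id, ← Category.assoc, hj₂q₂, hj₂q₀,
      zero_comp, sub_zero, Category.id_comp, sub_self]
  have hj₀r : j₀ ≫ r = 0 := by
    rw [hrdef]
    simp only [Preadditive.comp_sub, Category.comp_id, ← Category.assoc, hj₀q₂, hj₀q₀,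
      zero_comp, sub_zero, Category.id_comp, sub_self]
  have hi₀t : (shiftFunctor C (1 : ℤ)).map i₀ ≫ t = 0 := by
    rw [hj₀, Category.assoc, ← ht, hj₀r]
  have hi₁t : δ₁ ≫ (shiftFunctor C (1 : ℤ)).map i₁ ≫ t = 0 := by
    rw [← Category.assoc, hj₂δ, Category.assoc, ← ht, hj₂r]
  obtain ⟨z, hz⟩ : ∃ z : (M⟦(1 : ℤ)⟧ : C) ⟶ B,
      (shiftFunctor C (1 : ℤ)).map i₁ ≫ t =
        (-((shiftFunctor C (1 : ℤ)).map (i₁ ≫ f))) ≫ z :=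
    Triangle.yoneda_exact₃ _ (rot_of_distTriang _ hT1) _ (by exact hi₁t)
  have hδf : δ ≫ (shiftFunctor C (1 : ℤ)).map f = 0 := by
    have h23 : δ ≫ (-((shiftFunctor C (1 : ℤ)).map f)) = 0 :=
      comp_distTriang_mor_zero₂₃ _ hrot
    rw [Preadditive.comp_neg, neg_eq_zero] at h23
    exact h23
  have hr0 : r = 0 := by
    have htt : t = (shiftFunctor C (1 : ℤ)).map p₁ ≫ (shiftFunctor C (1 : ℤ)).map i₁ ≫ t := by
      have hone : (shiftFunctor C (1 : ℤ)).map (p₁ ≫ i₁ + p₀ ≫ i₀) = 𝟙 _ := by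
        rw [hsum, CategoryTheory.Functor.map_id]
      calc t = (shiftFunctor C (1 : ℤ)).map (p₁ ≫ i₁ + p₀ ≫ i₀) ≫ t := by
              rw [hone, Category.id_comp]
        _ = (shiftFunctor C (1 : ℤ)).map p₁ ≫ (shiftFunctor C (1 : ℤ)).map i₁ ≫ t
            + (shiftFunctor C (1 : ℤ)).map p₀ ≫ (shiftFunctor C (1 : ℤ)).map i₀ ≫ t := by
              rw [CategoryTheory.Functor.map_add, Preadditive.add_comp,
                CategoryTheory.Functor.map_comp, CategoryTheory.Functor.map_comp,
                Category.assoc, Category.assoc]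
        _ = (shiftFunctor C (1 : ℤ)).map p₁ ≫ (shiftFunctor C (1 : ℤ)).map i₁ ≫ t := by
              rw [hi₀t, comp_zero, add_zero]
    rw [ht, htt, hz]
    simp only [Preadditive.neg_comp, Preadditive.comp_neg, neg_eq_zero]
    rw [show (shiftFunctor C (1 : ℤ)).map p₁ ≫ (shiftFunctor C (1 : ℤ)).map (i₁ ≫ f) ≫ z =
        (shiftFunctor C (1 : ℤ)).map f ≫ z from by
      rw [← Category.assoc, ← CategoryTheory.Functor.map_comp, hfp]]
    rw [← Category.assoc, hδf, zero_comp]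
  rw [hrdef, sub_sub, sub_eq_zero] at hr0
  have hsum2 : q₂ ≫ j₂ + q₀ ≫ j₀ = 𝟙 B := hr0.symm
  have hδformula : δ = q₂ ≫ δ₁ ≫ (shiftFunctor C (1 : ℤ)).map i₁ +
      q₀ ≫ (shiftFunctor C (1 : ℤ)).map i₀ := by
    calc δ = (q₂ ≫ j₂ + q₀ ≫ j₀) ≫ δ := by rw [hsum2, Category.id_comp]
      _ = q₂ ≫ (j₂ ≫ δ) + q₀ ≫ (j₀ ≫ δ) := by
          rw [Preadditive.add_comp, Category.assoc, Category.assoc]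
      _ = _ := by rw [← hj₂δ, ← hj₀]
  have hM₂ge : M₂ ∈ w.Ge (m + 1) := w.Ge_retract hB j₂ q₂ hj₂q₂
  exact ⟨M₁, M₀, i₁, p₁, i₀, p₀, hi₁p₁, hi₀p₀, hi₁p₀, hi₀p₁, hsum, hp₁i₁, hM₀,
    M₂, i₁ ≫ f, g₁, δ₁, ⟨hT1, hM₁le, hM₂ge⟩, j₂, q₂, j₀, q₀,
    hj₂q₂, hj₀q₀, hj₂q₀, hj₀q₂, hsum2, hfp.symm, hj₂g.symm, hδformula⟩
end
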